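/- arXiv:0911.3919 — 4 statements merged into one kernel-verified Lean document; each statement's English description precedes it below -/
import Mathlib

section
/- Let g be an orthogonal transformation of V and let s be the orthogonal reflection in a linear hyperplane of V. Then the dimensions of the fixed spaces of g and of g∘s differ exactly by 1: |dim ker(1 − g) − dim ker(1 − g∘s)| = 1. -/
open scoped RealInnerProductSpace

noncomputable section

/-- `g` is the orthogonal reflection in the linear hyperplane orthogonal to some
nonzero vector `u`. -/
def IsLinRefl {V : Type*} [NormedAddCommGroup V] [InnerProductSpace ℝ V]
    (g : V ≃ₗᵢ[ℝ] V) : Prop :=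
  ∃ u : V, u ≠ 0 ∧ ∀ x : V, g x = x - ((2 * ⟪x, u⟫) / ⟪u, u⟫) • u

/-- The union of the reflection hyperplanes (mirrors) of the reflections belonging to `W`;
the mirror of a reflection is exactly its set of fixed points. -/
def mirrors {V : Type*} [NormedAddCommGroup V] [InnerProductSpace ℝ V]
    (W : Subgroup (V ≃ₗᵢ[ℝ] V)) : Set V :=
  ⋃ g ∈ {g : V ≃ₗᵢ[ℝ] V | g ∈ W ∧ IsLinRefl g}, {x : V | g x = x}

/-- `C` is a fundamental chamber for `W`: the closure of a connected component of the
complement of the union of the reflection hyperplanes of `W`. -/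
def IsChamber {V : Type*} [NormedAddCommGroup V] [InnerProductSpace ℝ V]
    (W : Subgroup (V ≃ₗᵢ[ℝ] V)) (C : Set V) : Prop :=
  ∃ x₀ ∈ (mirrors W)ᶜ, C = closure (connectedComponentIn (mirrors W)ᶜ x₀)

/-- The endomorphism `1 - w` of `V`. -/
def oneSub {V : Type*} [NormedAddCommGroup V] [InnerProductSpace ℝ V]
    (w : V ≃ₗᵢ[ℝ] V) : V →ₗ[ℝ] V :=
  LinearMap.id - (w.toLinearEquiv : V →ₗ[ℝ] V)

section Aux
variable {V : Type*} [NormedAddCommGroup V] [InnerProductSpace ℝ V]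

lemma mem_ker_oneSub (w : V ≃ₗᵢ[ℝ] V) (x : V) :
    x ∈ LinearMap.ker (oneSub w) ↔ w x = x := by
  rw [LinearMap.mem_ker]
  show x - w x = 0 ↔ _
  rw [sub_eq_zero, eq_comm]

example (g s : V ≃ₗᵢ[ℝ] V) (x : V) : (g * s) x = g (s x) := rfl
example (g : V ≃ₗᵢ[ℝ] V) (x : V) : g⁻¹ (g x) = x := by simp
example (g : V ≃ₗᵢ[ℝ] V) (x : V) : g (g⁻¹ x) = x := by simp
example (g : V ≃ₗᵢ[ℝ] V) (x y : V) : ⟪g x, g y⟫ = ⟪x, y⟫ := g.inner_map_map x y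

lemma ker_oneSub_inv (g : V ≃ₗᵢ[ℝ] V) :
    LinearMap.ker (oneSub g⁻¹) = LinearMap.ker (oneSub g) := by
  ext x
  rw [mem_ker_oneSub, mem_ker_oneSub]
  constructor
  · intro h; conv_lhs => rw [← h]
    simp
  · intro h; conv_lhs => rw [← h]
    simp

variable [FiniteDimensional ℝ V]

lemma range_oneSub (w : V ≃ₗᵢ[ℝ] V) :
    LinearMap.range (oneSub w) = (LinearMap.ker (oneSub w))ᗮ := by
  apply Submodule.eq_of_le_of_finrank_eq
  · rintro _ ⟨x, rfl⟩
    rw [Submodule.mem_orthogonal]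
    intro y hy
    rw [mem_ker_oneSub] at hy
    show ⟪y, x - w x⟫ = 0
    rw [inner_sub_right]
    nth_rewrite 2 [← hy]
    rw [w.inner_map_map, sub_self]
  · have h1 := LinearMap.finrank_range_add_finrank_ker (oneSub w)
    have h2 := (LinearMap.ker (oneSub w)).finrank_add_finrank_orthogonal
    omega

lemma finrank_inf_ker (K : Submodule ℝ V) (f : V →ₗ[ℝ] ℝ)
    (hx : ∃ x ∈ K, f x ≠ 0) :
    Module.finrank ℝ ↥(K ⊓ LinearMap.ker f) + 1 = Module.finrank ℝ K := by
  obtain ⟨x, hxK, hfx⟩ := hx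
  have h1 := LinearMap.finrank_range_add_finrank_ker (f.comp K.subtype)
  have hker : LinearMap.ker (f.comp K.subtype) = Submodule.comap K.subtype (K ⊓ LinearMap.ker f) := by
    rw [LinearMap.ker_comp, Submodule.comap_inf]
    simp [Submodule.comap_subtype_self]
  have e := Submodule.comapSubtypeEquivOfLe (inf_le_left : K ⊓ LinearMap.ker f ≤ K)
  have hk : Module.finrank ℝ ↥(LinearMap.ker (f.comp K.subtype)) =
      Module.finrank ℝ ↥(K ⊓ LinearMap.ker f) := by
    rw [hker]; exact e.finrank_eq
  have hr : Module.finrank ℝ ↥(LinearMap.range (f.comp K.subtype)) = 1 := by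
    have : LinearMap.range (f.comp K.subtype) = ⊤ := by
      rcases (eq_bot_or_eq_top (LinearMap.range (f.comp K.subtype))) with h | h
      · exfalso
        have : f.comp K.subtype ⟨x, hxK⟩ = 0 := by
          have := LinearMap.mem_range_self (f.comp K.subtype) ⟨x, hxK⟩
          rw [h] at this; simpa using this
        exact hfx this
      · exact h
    rw [this, finrank_top, Module.finrank_self]
  omega

end Aux

/-- For an orthogonal transformation `g` and a hyperplane reflection `s`, the dimensions of
the fixed-point spaces of `g` and of `g ∘ s` differ exactly by `1`. -/
theorem finrank_fixed_space_mul_reflection {V : Type*} [NormedAddCommGroup V]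
    [InnerProductSpace ℝ V] [FiniteDimensional ℝ V]
    (g s : V ≃ₗᵢ[ℝ] V) (hs : IsLinRefl s) :
    ((Module.finrank ℝ (LinearMap.ker (oneSub g)) : ℤ) -
      (Module.finrank ℝ (LinearMap.ker (oneSub (g * s))) : ℤ)).natAbs = 1 := by
  obtain ⟨u, hu, hsu⟩ := hs
  have huu : ⟪u, u⟫ ≠ 0 := inner_self_ne_zero.mpr hu
  set f : V →ₗ[ℝ] ℝ := (innerSL ℝ u).toLinearMap with hf
  have hfapp : ∀ x, f x = ⟪u, x⟫ := fun x => rfl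
  set A := LinearMap.ker (oneSub g) with hA
  set B := LinearMap.ker (oneSub (g * s)) with hB
  have hsfix : ∀ x, f x = 0 → s x = x := by
    intro x hx
    rw [hfapp, real_inner_comm] at hx
    rw [hsu x, hx]
    simp
  have hinf : A ⊓ LinearMap.ker f = B ⊓ LinearMap.ker f := by
    ext x
    rw [Submodule.mem_inf, Submodule.mem_inf, hA, hB, mem_ker_oneSub, mem_ker_oneSub]
    constructor
    · rintro ⟨h1, h2⟩
      refine ⟨?_, h2⟩
      show g (s x) = x
      rw [hsfix x (LinearMap.mem_ker.mp h2), h1]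
    · rintro ⟨h1, h2⟩
      refine ⟨?_, h2⟩
      have h3 : g (s x) = x := h1
      rwa [hsfix x (LinearMap.mem_ker.mp h2)] at h3
  by_cases hAH : A ≤ LinearMap.ker f
  · -- Fix(g) inside the hyperplane: Fix(gs) sticks out
    have huA : u ∈ Aᗮ := by
      rw [Submodule.mem_orthogonal]
      intro y hy
      have h := hAH hy
      rw [LinearMap.mem_ker, hfapp] at h
      rw [real_inner_comm]; exact h
    have hmem : u ∈ LinearMap.range (oneSub g⁻¹) := by
      rw [range_oneSub, ker_oneSub_inv]; exact huA
    obtain ⟨w, hw⟩ := hmem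
    have hw' : w - g⁻¹ w = u := hw
    have hgw : ⟪g⁻¹ w, g⁻¹ w⟫ = ⟪w, w⟫ := (g⁻¹).inner_map_map w w
    have h2wu : 2 * ⟪w, u⟫ = ⟪u, u⟫ := by
      rw [← hw']
      simp only [inner_sub_left, inner_sub_right]
      rw [hgw, real_inner_comm (g⁻¹ w) w]
      ring
    have hsw : s w = w - u := by
      rw [hsu w, h2wu, div_self huu, one_smul]
    have hwB : w ∈ B := by
      rw [hB, mem_ker_oneSub]
      show g (s w) = w
      have hgiw : w - u = g⁻¹ w := by rw [← hw']; abel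
      rw [hsw, hgiw]
      simp
    have hfw : f w ≠ 0 := by
      rw [hfapp, real_inner_comm]
      intro h
      rw [h, mul_zero] at h2wu
      exact huu h2wu.symm
    have hAeq : A ⊓ LinearMap.ker f = A := inf_eq_left.mpr hAH
    have hBd : Module.finrank ℝ ↥(B ⊓ LinearMap.ker f) + 1 = Module.finrank ℝ B :=
      finrank_inf_ker B f ⟨w, hwB, hfw⟩
    rw [← hinf, hAeq] at hBd
    omega
  · -- Fix(g) sticks out: Fix(gs) inside the hyperplane
    obtain ⟨x, hxA, hxf⟩ := SetLike.not_le_iff_exists.mp hAH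
    have hxf' : f x ≠ 0 := fun h => hxf (LinearMap.mem_ker.mpr h)
    have hux : ⟪u, x⟫ ≠ 0 := by rw [← hfapp]; exact hxf'
    have hBH : B ≤ LinearMap.ker f := by
      intro y hy
      rw [hB, mem_ker_oneSub] at hy
      have hy' : g (s y) = y := hy
      rw [LinearMap.mem_ker, hfapp]
      have hgx : g x = x := (mem_ker_oneSub g x).mp hxA
      have h1 : ⟪y, x⟫ = ⟪s y, x⟫ := by
        conv_lhs => rw [← hy', ← hgx]
        exact g.inner_map_map _ _
      rw [hsu y, inner_sub_left, real_inner_smul_left] at h1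
      have h2 : (2 * ⟪y, u⟫ / ⟪u, u⟫) * ⟪u, x⟫ = 0 := by linear_combination h1
      rcases mul_eq_zero.mp h2 with h3 | h3
      · rcases div_eq_zero_iff.mp h3 with h4 | h4
        · have : ⟪y, u⟫ = 0 := by linear_combination h4 / 2
          rw [real_inner_comm]; exact this
        · exact absurd h4 huu
      · exact absurd h3 hux
    have hBeq : B ⊓ LinearMap.ker f = B := inf_eq_left.mpr hBH
    have hAd : Module.finrank ℝ ↥(A ⊓ LinearMap.ker f) + 1 = Module.finrank ℝ A :=
      finrank_inf_ker A f ⟨x, hxA, hxf'⟩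
    rw [hinf, hBeq] at hAd
    omega
end
end

section
/- Assume W is essential and let w, w' ∈ W_reg. If wC ∩ w'C ≠ {0}, then C_w ∩ C_{w'} ≠ {0}. -/
open scoped RealInnerProductSpace

noncomputable section

/-- If `W` is essential, `w, w' ∈ W_reg` and `wC ∩ w'C ≠ {0}`, then
`(1-w)C ∩ (1-w')C ≠ {0}`. -/
theorem cones_intersect_of_chambers_intersect {V : Type*} [NormedAddCommGroup V]
    [InnerProductSpace ℝ V] [FiniteDimensional ℝ V]
    (W : Subgroup (V ≃ₗᵢ[ℝ] V)) (C : Set V)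
    (hWfin : (W : Set (V ≃ₗᵢ[ℝ] V)).Finite)
    (hWgen : Subgroup.closure {g : V ≃ₗᵢ[ℝ] V | g ∈ W ∧ IsLinRefl g} = W)
    (hC : IsChamber W C)
    (hcover : ∀ v : V, ∃ w ∈ W, ∃ x ∈ C, w x = v)
    (hdisj : ∀ w ∈ W, ∀ w' ∈ W, w ≠ w' →
      ∀ x ∈ interior C, ∀ x' ∈ interior C, w x ≠ w' x')
    (hess : ∀ v : V, (∀ w ∈ W, w v = v) → v = 0)
    (w w' : V ≃ₗᵢ[ℝ] V) (hw : w ∈ W) (hw' : w' ∈ W)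
    (hwreg : ∀ x : V, w x = x → x = 0) (hw'reg : ∀ x : V, w' x = x → x = 0)
    (hne : {v : V | ∃ x ∈ C, v = w x} ∩ {v : V | ∃ x ∈ C, v = w' x} ≠ {0}) :
    {v : V | ∃ x ∈ C, v = x - w x} ∩ {v : V | ∃ x ∈ C, v = x - w' x} ≠ {0} := by
  classical
  obtain ⟨x₀, hx₀, hCeq⟩ := hC
  set R := {g : V ≃ₗᵢ[ℝ] V | g ∈ W ∧ IsLinRefl g} with hRdef
  have hRW : R ⊆ (W : Set (V ≃ₗᵢ[ℝ] V)) := fun g hg => hg.1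
  have hRfin : R.Finite := hWfin.subset hRW
  have _inst : Finite ↥R := hRfin.to_subtype
  have hchoice : ∀ g : ↥R, ∃ uvec : V, uvec ≠ 0 ∧
      ∀ x : V, (g : V ≃ₗᵢ[ℝ] V) x = x - ((2 * ⟪x, uvec⟫) / ⟪uvec, uvec⟫) • uvec :=
    fun g => g.2.2
  choose u hune hufix using hchoice
  have huu : ∀ g : ↥R, (⟪u g, u g⟫ : ℝ) ≠ 0 := fun g => inner_self_ne_zero.mpr (hune g)
  have huupos : ∀ g : ↥R, (0:ℝ) < ⟪u g, u g⟫ := by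
    intro g
    rw [real_inner_self_eq_norm_sq]
    have h := norm_pos_iff.mpr (hune g)
    positivity
  -- fixed iff inner zero
  have hfix_iff : ∀ (g : ↥R) (x : V), (g : V ≃ₗᵢ[ℝ] V) x = x ↔ ⟪x, u g⟫ = 0 := by
    intro g x
    rw [hufix g x, sub_eq_self, smul_eq_zero]
    constructor
    · rintro (h | h)
      · rcases div_eq_zero_iff.mp h with h' | h'
        · linarith [h']
        · exact absurd h' (huu g)
      · exact absurd h (hune g)
    · intro h
      left
      rw [h]
      ring_nf
  have hx₀u : ∀ g : ↥R, ⟪x₀, u g⟫ ≠ 0 := by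
    intro g h
    exact hx₀ (Set.mem_biUnion g.2 ((hfix_iff g x₀).mpr h))
  set Q := {z : V | ∀ g : ↥R, 0 < ⟪z, u g⟫ * ⟪x₀, u g⟫} with hQdef
  set Qbar := {z : V | ∀ g : ↥R, 0 ≤ ⟪z, u g⟫ * ⟪x₀, u g⟫} with hQbardef
  have hx₀Q : x₀ ∈ Q := fun g => mul_self_pos.mpr (hx₀u g)
  have hQopen : IsOpen Q := by
    have hQi : Q = ⋂ g : ↥R, {z : V | 0 < ⟪z, u g⟫ * ⟪x₀, u g⟫} := by
      ext z; simp [hQdef, Set.mem_iInter]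
    rw [hQi]
    exact isOpen_iInter_of_finite fun g =>
      isOpen_lt continuous_const ((continuous_id.inner continuous_const).mul continuous_const)
  have hQconvex : Convex ℝ Q := by
    have hQi : Q = ⋂ g : ↥R, {z : V | 0 < ⟪z, u g⟫ * ⟪x₀, u g⟫} := by
      ext z; simp [hQdef, Set.mem_iInter]
    rw [hQi]
    refine convex_iInter fun g => ?_
    refine convex_halfSpace_gt ?_ 0
    constructor
    · intro a b; simp [inner_add_left, add_mul]
    · intro r a; simp [real_inner_smul_left, mul_assoc]
  have hQsub : Q ⊆ (mirrors W)ᶜ := by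
    intro z hz hzm
    rw [mirrors] at hzm
    obtain ⟨g, hgR, hgz⟩ := Set.mem_iUnion₂.mp hzm
    have h0 : ⟪z, u ⟨g, hgR⟩⟫ = 0 := (hfix_iff ⟨g, hgR⟩ z).mp hgz
    have := hz ⟨g, hgR⟩
    rw [h0] at this
    simp at this
  have hKQ : connectedComponentIn (mirrors W)ᶜ x₀ = Q := by
    apply Set.Subset.antisymm
    · intro z hz g
      by_contra hcon
      push_neg at hcon
      have hK : IsPreconnected (connectedComponentIn (mirrors W)ᶜ x₀) :=
        isPreconnected_connectedComponentIn
      have hx₀K : x₀ ∈ connectedComponentIn (mirrors W)ᶜ x₀ :=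
        mem_connectedComponentIn hx₀
      have hcont : ContinuousOn (fun y : V => ⟪y, u g⟫) (connectedComponentIn (mirrors W)ᶜ x₀) :=
        (continuous_id.inner continuous_const).continuousOn
      have hzero : ∃ y ∈ connectedComponentIn (mirrors W)ᶜ x₀, ⟪y, u g⟫ = 0 := by
        rcases mul_nonpos_iff.mp hcon with ⟨h1, h2⟩ | ⟨h1, h2⟩
        · obtain ⟨y, hy, hy0⟩ := hK.intermediate_value hx₀K hz hcont ⟨h2, h1⟩
          exact ⟨y, hy, hy0⟩
        · obtain ⟨y, hy, hy0⟩ := hK.intermediate_value hz hx₀K hcont ⟨h1, h2⟩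
          exact ⟨y, hy, hy0⟩
      obtain ⟨y, hyK, hy0⟩ := hzero
      exact (connectedComponentIn_subset _ _ hyK)
        (Set.mem_biUnion g.2 ((hfix_iff g y).mpr hy0))
    · exact hQconvex.isPreconnected.subset_connectedComponentIn hx₀Q hQsub
  have hpert : ∀ z ∈ Qbar, ∀ t : ℝ, 0 < t → z + t • x₀ ∈ Q := by
    intro z hz t ht g
    have h1 : ⟪z + t • x₀, u g⟫ = ⟪z, u g⟫ + t * ⟪x₀, u g⟫ := by
      rw [inner_add_left, real_inner_smul_left]
    rw [h1, add_mul]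
    have h2 := hz g
    have h3 : 0 < t * ⟪x₀, u g⟫ * ⟪x₀, u g⟫ := by
      have := mul_self_pos.mpr (hx₀u g)
      nlinarith
    linarith
  have hQbarclosed : IsClosed Qbar := by
    have hQi : Qbar = ⋂ g : ↥R, {z : V | 0 ≤ ⟪z, u g⟫ * ⟪x₀, u g⟫} := by
      ext z; simp [hQbardef, Set.mem_iInter]
    rw [hQi]
    exact isClosed_iInter fun g =>
      isClosed_le continuous_const ((continuous_id.inner continuous_const).mul continuous_const)
  have hCbar : C = Qbar := by
    rw [hCeq, hKQ]
    apply Set.Subset.antisymm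
    · exact closure_minimal (fun z hz g => (hz g).le) hQbarclosed
    · intro z hz
      have hseq : Filter.Tendsto (fun n : ℕ => z + (1 / (n + 1) : ℝ) • x₀)
          Filter.atTop (nhds z) := by
        have h1 : Filter.Tendsto (fun n : ℕ => (1 / (n + 1) : ℝ)) Filter.atTop (nhds 0) :=
          tendsto_one_div_add_atTop_nhds_zero_nat
        have h2 := Filter.Tendsto.add (tendsto_const_nhds (x := z))
          (h1.smul_const x₀)
        simpa using h2
      refine mem_closure_of_tendsto hseq (Filter.Eventually.of_forall fun n => ?_)
      exact hpert z hz _ (by positivity)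
  have hQC : Q ⊆ C := by
    rw [hCbar]; exact fun z hz g => (hz g).le
  have hQint : Q ⊆ interior C := interior_maximal hQC hQopen
  -- Step 3: maximizer lands in C
  have hmax_in_C : ∀ p ∈ Q, ∀ y ∈ C, ∃ g₀, g₀ ∈ W ∧
      (∀ g ∈ W, ⟪p, (g : V ≃ₗᵢ[ℝ] V) y⟫ ≤ ⟪p, (g₀ : V ≃ₗᵢ[ℝ] V) y⟫) ∧
      (g₀ : V ≃ₗᵢ[ℝ] V) y ∈ C := by
    intro p hp y hy
    obtain ⟨g₀, hg₀W, hg₀max⟩ := Set.exists_max_image (W : Set (V ≃ₗᵢ[ℝ] V))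
      (fun g => ⟪p, g y⟫) hWfin ⟨1, one_mem W⟩
    refine ⟨g₀, hg₀W, fun g hg => hg₀max g hg, ?_⟩
    rw [hCbar]
    intro s
    have hsW : (s : V ≃ₗᵢ[ℝ] V) ∈ W := s.2.1
    have hle := hg₀max ((s : V ≃ₗᵢ[ℝ] V) * g₀) (mul_mem hsW hg₀W)
    have hformula : ((s : V ≃ₗᵢ[ℝ] V) * g₀) y
        = g₀ y - ((2 * ⟪g₀ y, u s⟫) / ⟪u s, u s⟫) • u s := hufix s (g₀ y)
    rw [hformula, inner_sub_right, real_inner_smul_right] at hle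
    have hle' : 0 ≤ 2 * ⟪g₀ y, u s⟫ / ⟪u s, u s⟫ * ⟪p, u s⟫ := by linarith
    have h2 : 0 ≤ ⟪g₀ y, u s⟫ * ⟪p, u s⟫ := by
      rw [div_mul_eq_mul_div] at hle'
      rcases div_nonneg_iff.mp hle' with ⟨h, _⟩ | ⟨_, h⟩
      · nlinarith
      · exact absurd (huupos s) (by linarith)
    have hps := hp s
    have hb : ⟪p, u s⟫ ≠ 0 := by
      intro h; rw [h] at hps; simp at hps
    have hb2 : 0 < ⟪p, u s⟫ * ⟪p, u s⟫ := mul_self_pos.mpr hb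
    nlinarith [mul_nonneg h2 hps.le]
  -- Step 4: interior uniqueness
  have huniq_int : ∀ q ∈ Q, ∀ g ∈ W, (g : V ≃ₗᵢ[ℝ] V) q ∈ C → (g : V ≃ₗᵢ[ℝ] V) q = q := by
    intro q hq g hg hgqC
    by_cases hgq : (g : V ≃ₗᵢ[ℝ] V) q ∈ Q
    · by_cases h1 : g = 1
      · rw [h1]; rfl
      · have := hdisj g hg 1 (one_mem W) h1 q (hQint hq) (g q) (hQint hgq)
        simp at this
    · obtain ⟨s, hs0⟩ : ∃ s : ↥R, ¬ (0 < ⟪g q, u s⟫ * ⟪x₀, u s⟫) := by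
        simpa [hQdef] using hgq
      have hge : 0 ≤ ⟪g q, u s⟫ * ⟪x₀, u s⟫ := by
        rw [hCbar] at hgqC; exact hgqC s
      have h0 : ⟪g q, u s⟫ = 0 := by
        rcases mul_eq_zero.mp (le_antisymm (not_lt.mp hs0) hge) with h | h
        exacts [h, absurd h (hx₀u s)]
      have hfix : (s : V ≃ₗᵢ[ℝ] V) (g q) = g q := (hfix_iff s _).mpr h0
      have hmul : ((s : V ≃ₗᵢ[ℝ] V) * g) q = g q := hfix
      have hs1 : (s : V ≃ₗᵢ[ℝ] V) ≠ 1 := by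
        intro h
        have h2 : (s : V ≃ₗᵢ[ℝ] V) (u s) = u s - ((2 * ⟪u s, u s⟫) / ⟪u s, u s⟫) • u s :=
          hufix s (u s)
        rw [h, mul_div_assoc, div_self (huu s)] at h2
        have h3 : u s = u s - (2:ℝ) • u s := by simpa using h2
        have h4 := sub_eq_self.mp h3.symm
        rcases smul_eq_zero.mp h4 with h5 | h5
        · norm_num at h5
        · exact hune s h5
      have hne' : (s : V ≃ₗᵢ[ℝ] V) * g ≠ g := by
        intro h
        exact hs1 (mul_eq_right.mp h)
      exact absurd hmul
        (hdisj _ (mul_mem s.2.1 hg) g hg hne' q (hQint hq) q (hQint hq))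
  -- Step 5: gate property on Q
  have hgateQ : ∀ p ∈ Q, ∀ q ∈ Q, ∀ g ∈ W, ⟪p, (g : V ≃ₗᵢ[ℝ] V) q⟫ ≤ ⟪p, q⟫ := by
    intro p hp q hq g hg
    obtain ⟨g₀, hg₀W, hmax, hg₀C⟩ := hmax_in_C p hp q (hQC hq)
    have heq := huniq_int q hq g₀ hg₀W hg₀C
    calc ⟪p, (g : V ≃ₗᵢ[ℝ] V) q⟫ ≤ ⟪p, (g₀ : V ≃ₗᵢ[ℝ] V) q⟫ := hmax g hg
      _ = ⟪p, q⟫ := by rw [heq]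
  -- Step 6: gate property on C
  have hgateC : ∀ x ∈ C, ∀ y ∈ C, ∀ g ∈ W, ⟪x, (g : V ≃ₗᵢ[ℝ] V) y⟫ ≤ ⟪x, y⟫ := by
    intro x hx y hy g hg
    have hxb : x ∈ Qbar := by rw [hCbar] at hx; exact hx
    have hyb : y ∈ Qbar := by rw [hCbar] at hy; exact hy
    have key : ∀ t : ℝ, 0 < t →
        ⟪x + t • x₀, (g : V ≃ₗᵢ[ℝ] V) (y + t • x₀)⟫ ≤ ⟪x + t • x₀, y + t • x₀⟫ :=
      fun t ht => hgateQ _ (hpert x hxb t ht) _ (hpert y hyb t ht) g hg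
    have hseq : Filter.Tendsto (fun n : ℕ => (1 / (n + 1) : ℝ)) Filter.atTop (nhds 0) :=
      tendsto_one_div_add_atTop_nhds_zero_nat
    have hc0 : Continuous fun t : ℝ => x + t • x₀ :=
      continuous_const.add (continuous_id.smul continuous_const)
    have hc0' : Continuous fun t : ℝ => y + t • x₀ :=
      continuous_const.add (continuous_id.smul continuous_const)
    have hφ : Continuous fun t : ℝ => ⟪x + t • x₀, (g : V ≃ₗᵢ[ℝ] V) (y + t • x₀)⟫ :=
      hc0.inner ((g : V ≃ₗᵢ[ℝ] V).continuous.comp hc0')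
    have hψ : Continuous fun t : ℝ => ⟪x + t • x₀, y + t • x₀⟫ := hc0.inner hc0'
    have h1 : Filter.Tendsto
        (fun n : ℕ => ⟪x + (1/(n+1):ℝ) • x₀, (g : V ≃ₗᵢ[ℝ] V) (y + (1/(n+1):ℝ) • x₀)⟫)
        Filter.atTop (nhds ⟪x, (g : V ≃ₗᵢ[ℝ] V) y⟫) := by
      have := (hφ.tendsto 0).comp hseq
      simpa [Function.comp_def] using this
    have h2 : Filter.Tendsto (fun n : ℕ => ⟪x + (1/(n+1):ℝ) • x₀, y + (1/(n+1):ℝ) • x₀⟫)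
        Filter.atTop (nhds ⟪x, y⟫) := by
      have := (hψ.tendsto 0).comp hseq
      simpa [Function.comp_def] using this
    exact le_of_tendsto_of_tendsto' h1 h2 fun n => key _ (by positivity)
  -- Step 7: uniqueness in C
  have huniq : ∀ z ∈ C, ∀ g ∈ W, (g : V ≃ₗᵢ[ℝ] V) z ∈ C → (g : V ≃ₗᵢ[ℝ] V) z = z := by
    intro z hz g hg hgz
    have h1 : ⟪(g : V ≃ₗᵢ[ℝ] V) z, (g : V ≃ₗᵢ[ℝ] V) z⟫ ≤ ⟪(g : V ≃ₗᵢ[ℝ] V) z, z⟫ :=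
      hgateC _ hgz z hz g hg
    have hnorm : ⟪(g : V ≃ₗᵢ[ℝ] V) z, (g : V ≃ₗᵢ[ℝ] V) z⟫ = ⟪z, z⟫ :=
      (g : V ≃ₗᵢ[ℝ] V).inner_map_map z z
    have h2 : ⟪(g : V ≃ₗᵢ[ℝ] V) z - z, (g : V ≃ₗᵢ[ℝ] V) z - z⟫ ≤ 0 := by
      rw [real_inner_sub_sub_self]
      linarith
    have h3 := real_inner_self_nonpos.mp h2
    exact sub_eq_zero.mp h3
  -- Final assembly
  have h0C : (0 : V) ∈ C := by
    rw [hCbar]; intro g; simp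
  have hS : ∃ v : V, (v ∈ {v : V | ∃ x ∈ C, v = w x} ∩ {v : V | ∃ x ∈ C, v = w' x}) ∧ v ≠ 0 := by
    by_contra hcon
    push_neg at hcon
    apply hne
    apply Set.eq_singleton_iff_unique_mem.mpr
    constructor
    · exact ⟨⟨0, h0C, by simp⟩, ⟨0, h0C, by simp⟩⟩
    · exact fun v hv => hcon v hv
  obtain ⟨v, ⟨⟨x, hxC, hvx⟩, ⟨x', hx'C, hvx'⟩⟩, hv0⟩ := hS
  have hgW : w'⁻¹ * w ∈ W := mul_mem (inv_mem hw') hw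
  have hgx : (w'⁻¹ * w) x = x' := by
    apply w'.injective
    have e1 : w' ((w'⁻¹ * w) x) = w x := w'.apply_symm_apply (w x)
    rw [e1, ← hvx, hvx']
  have hxx : (w'⁻¹ * w) x = x := by
    apply huniq x hxC _ hgW
    rw [hgx]; exact hx'C
  have hxx' : x' = x := by rw [← hgx, hxx]
  have hww' : w x = w' x' := by rw [← hvx, hvx']
  have hune0 : x - w x ≠ 0 := by
    intro h
    have hx0 : x = 0 := hwreg x (sub_eq_zero.mp h).symm
    rw [hx0] at hvx
    simp at hvx
    exact hv0 hvx
  intro heq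
  have hmem : x - w x ∈ ({0} : Set V) := by
    rw [← heq]
    constructor
    · exact ⟨x, hxC, rfl⟩
    · refine ⟨x', hx'C, ?_⟩
      rw [hxx'] at hww' ⊢
      rw [hww']
  exact hune0 (by simpa using hmem)
end
end

section
/- Let w ∈ W_reg, so that w⁻¹ − 1 is invertible, and for u ∈ V set v_u := (w⁻¹ − 1)⁻¹ u. Then: (1) for all u, r ∈ V, ⟪v_u, r⟫ + ⟪v_r, u⟫ = −⟪u, r⟫; (2) for all u ∈ V, ⟪v_u, u⟫ = −⟪u, u⟫/2; (3) for all u ≠ 0, v_u = w (s_u v_u), where s_u is the orthogonal reflection in the hyperplane H_u = u^⊥; (4) for all u ≠ 0, v_u is orthogonal to (1 − w)H_u = {x − w x : x ∈ H_u}; (5) for all u ≠ 0, ker(1 − w∘s_u) is the line ℝ·v_u spanned by v_u. -/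
open scoped RealInnerProductSpace

noncomputable section

/-- Properties of the vectors `v_u = (w⁻¹ - 1)⁻¹ u` for a regular element `w` of an
essential finite reflection group `W`. -/
theorem v_u_properties {V : Type*} [NormedAddCommGroup V] [InnerProductSpace ℝ V]
    [FiniteDimensional ℝ V]
    (W : Subgroup (V ≃ₗᵢ[ℝ] V))
    (hWfin : (W : Set (V ≃ₗᵢ[ℝ] V)).Finite)
    (hWgen : Subgroup.closure {g : V ≃ₗᵢ[ℝ] V | g ∈ W ∧ IsLinRefl g} = W)
    (hess : ∀ v : V, (∀ w ∈ W, w v = v) → v = 0)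
    (w : V ≃ₗᵢ[ℝ] V) (hw : w ∈ W) (hwreg : ∀ x : V, w x = x → x = 0)
    (v : V → V) (hv : ∀ u : V, w.symm (v u) - v u = u) :
    (∀ u r : V, ⟪v u, r⟫ + ⟪v r, u⟫ = -⟪u, r⟫) ∧
    (∀ u : V, ⟪v u, u⟫ = -(⟪u, u⟫ / 2)) ∧
    (∀ u : V, u ≠ 0 → v u = w (v u - ((2 * ⟪v u, u⟫) / ⟪u, u⟫) • u)) ∧
    (∀ u : V, u ≠ 0 → ∀ x : V, ⟪x, u⟫ = 0 → ⟪v u, x - w x⟫ = 0) ∧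
    (∀ u : V, u ≠ 0 → ∀ x : V,
      (w (x - ((2 * ⟪x, u⟫) / ⟪u, u⟫) • u) = x ↔ ∃ t : ℝ, x = t • v u)) := by
  have hv' : ∀ u : V, w.symm (v u) = v u + u := by
    intro u
    have h := sub_eq_iff_eq_add.mp (hv u)
    rw [h, add_comm]
  have hw' : ∀ u : V, w (v u + u) = v u := by
    intro u
    rw [← hv' u, LinearIsometryEquiv.apply_symm_apply]
  have key1 : ∀ u r : V, ⟪v u, r⟫ + ⟪v r, u⟫ = -⟪u, r⟫ := by
    intro u r
    have h1 : ⟪w.symm (v u), w.symm (v r)⟫ = ⟪v u, v r⟫ :=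
      w.symm.inner_map_map _ _
    rw [hv' u, hv' r] at h1
    simp only [inner_add_left, inner_add_right] at h1
    have h2 : ⟪u, v r⟫ = ⟪v r, u⟫ := real_inner_comm _ _
    linarith
  have key2 : ∀ u : V, ⟪v u, u⟫ = -(⟪u, u⟫ / 2) := by
    intro u
    have := key1 u u
    linarith
  have key3 : ∀ u : V, u ≠ 0 → v u = w (v u - ((2 * ⟪v u, u⟫) / ⟪u, u⟫) • u) := by
    intro u hu
    have hne : ⟪u, u⟫ ≠ 0 := fun h => hu (inner_self_eq_zero.mp h)
    have hc : (2 * ⟪v u, u⟫) / ⟪u, u⟫ = -1 := by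
      rw [key2 u]; field_simp
    rw [hc, neg_one_smul, sub_neg_eq_add, hw' u]
  refine ⟨key1, key2, key3, ?_, ?_⟩
  · intro u hu x hx
    have h1 : ⟪w (w.symm (v u)), w x⟫ = ⟪w.symm (v u), x⟫ := w.inner_map_map _ _
    rw [LinearIsometryEquiv.apply_symm_apply, hv' u, inner_add_left] at h1
    have h2 : ⟪u, x⟫ = 0 := by rw [real_inner_comm]; exact hx
    rw [inner_sub_right, h1, h2]
    ring
  · intro u hu x
    have hne : ⟪u, u⟫ ≠ 0 := fun h => hu (inner_self_eq_zero.mp h)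
    constructor
    · intro hx
      have h1 : w x = x + ((2 * ⟪x, u⟫) / ⟪u, u⟫) • w u := by
        rw [map_sub, map_smul] at hx
        exact sub_eq_iff_eq_add.mp hx
      have h2 : w (v u) = v u - w u := by
        have h := hw' u
        rw [map_add] at h
        exact eq_sub_of_add_eq h
      refine ⟨-((2 * ⟪x, u⟫) / ⟪u, u⟫), ?_⟩
      have hy : w (x - (-((2 * ⟪x, u⟫) / ⟪u, u⟫)) • v u)
          = x - (-((2 * ⟪x, u⟫) / ⟪u, u⟫)) • v u := by
        rw [map_sub, map_smul, h1, h2]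
        module
      have h0 := hwreg _ hy
      rw [sub_eq_zero] at h0
      exact h0
    · rintro ⟨t, rfl⟩
      have hc : (2 * ⟪t • v u, u⟫) / ⟪u, u⟫ = -t := by
        rw [real_inner_smul_left, key2 u]
        field_simp
      rw [hc, show t • v u - (-t) • u = t • (v u + u) by module, map_smul, hw' u]
end
end

section
/- Let w ∈ W_reg and for u ∈ V set v_u := (w⁻¹ − 1)⁻¹ u. Then for every e ∈ Π one has ⟪v_e, (1 − w)π_e⟫ < 0. -/
open scoped RealInnerProductSpace

noncomputable section

/-- `e` is a unit normal to a codimension-one face (wall) of the chamber `C`, lying on the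
same side as `C`: `e` is a unit vector, `C` lies in the nonnegative half-space of `e`, the
reflection in the hyperplane `e^⊥` belongs to `W`, and the wall `e^⊥ ∩ C` contains a point
whose only mirror through it is `e^⊥` (so `e^⊥` really spans a facet of `C`). -/
def IsSimpleNormal {V : Type*} [NormedAddCommGroup V] [InnerProductSpace ℝ V]
    (W : Subgroup (V ≃ₗᵢ[ℝ] V)) (C : Set V) (e : V) : Prop :=
  ‖e‖ = 1 ∧ (∀ y ∈ C, 0 ≤ ⟪y, e⟫) ∧
    (∃ g ∈ W, ∀ x : V, g x = x - (2 * ⟪x, e⟫) • e) ∧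
    ∃ x ∈ C, ⟪x, e⟫ = 0 ∧
      ∀ g ∈ W, IsLinRefl g → g x = x → ∀ y : V, g y = y - (2 * ⟪y, e⟫) • e

/-- For `w ∈ W_reg` and `e ∈ Π` one has `⟪v_e, (1 - w) π_e⟫ < 0`, where
`v_e = (w⁻¹ - 1)⁻¹ e` and `π_e` is the dual basis vector of `e` with respect to the simple
system `Π` of the chamber `C`. -/
theorem inner_v_e_oneSub_pi_e_neg {V : Type*} [NormedAddCommGroup V] [InnerProductSpace ℝ V]
    [FiniteDimensional ℝ V]
    (W : Subgroup (V ≃ₗᵢ[ℝ] V)) (C : Set V)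
    (hWfin : (W : Set (V ≃ₗᵢ[ℝ] V)).Finite)
    (hWgen : Subgroup.closure {g : V ≃ₗᵢ[ℝ] V | g ∈ W ∧ IsLinRefl g} = W)
    (hC : IsChamber W C)
    (hcover : ∀ v : V, ∃ w ∈ W, ∃ x ∈ C, w x = v)
    (hdisj : ∀ w ∈ W, ∀ w' ∈ W, w ≠ w' →
      ∀ x ∈ interior C, ∀ x' ∈ interior C, w x ≠ w' x')
    (hess : ∀ v : V, (∀ w ∈ W, w v = v) → v = 0)
    (w : V ≃ₗᵢ[ℝ] V) (hw : w ∈ W) (hwreg : ∀ x : V, w x = x → x = 0)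
    (v : V → V) (hv : ∀ u : V, w.symm (v u) - v u = u)
    (e : V) (he : IsSimpleNormal W C e)
    (π : V) (hπe : ⟪π, e⟫ = 1)
    (hπ : ∀ f : V, IsSimpleNormal W C f → f ≠ e → ⟪π, f⟫ = 0) :
    ⟪v e, π - w π⟫ < 0 := by
  have h1 : ⟪v e, w π⟫ = ⟪w.symm (v e), π⟫ := by
    rw [← w.symm.inner_map_map (v e) (w π), w.symm_apply_apply]
  have h2 : ⟪v e, π - w π⟫ = ⟪v e - w.symm (v e), π⟫ := by
    rw [inner_sub_right, inner_sub_left, h1]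
  have h3 : v e - w.symm (v e) = -e := by
    have := hv e; linear_combination (norm := abel) -this
  rw [h2, h3, inner_neg_left, real_inner_comm, hπe]
  norm_num
end
end
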